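/- Let C ⊆ ℝ² be the simple closed curve obtained from the unit circle by removing the open arc determined by central angles 5π/4 and 7π/4 (i.e. {(cos θ, sin θ) : 5π/4 < θ < 7π/4}) and replacing it by the semicircle {(x, √(1/2 − x²) − 1/√2) : −1/√2 ≤ x ≤ 1/√2}. Then C has exactly two inscribed squares. -/

import Mathlib

open Complex Real Set

/-- A set `S ⊆ ℂ` is a square if it consists of the four points
`p, p + w, p + w + i·w, p + i·w` for some `p` and some `w ≠ 0`. -/
def IsSquarePts (S : Set ℂ) : Prop :=
  ∃ p w : ℂ, w ≠ 0 ∧ S = {p, p + w, p + w + Complex.I * w, p + Complex.I * w}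

/-- The collection of squares inscribed in a set `C ⊆ ℂ`. -/
def InscribedSquares (C : Set ℂ) : Set (Set ℂ) :=
  {S | IsSquarePts S ∧ S ⊆ C}

noncomputable section
namespace TwoSq

def kk : ℝ := 1 / Real.sqrt 2

lemma kk_pos : 0 < kk := by
  unfold kk; positivity

lemma kk_sq : kk ^ 2 = 1 / 2 := by
  unfold kk
  rw [div_pow, one_pow, Real.sq_sqrt (by norm_num : (2:ℝ) ≥ 0)]

lemma cstar_ex : ∃ c : ℝ, c ∈ Set.Icc (-(4:ℝ)/5) (-(7:ℝ)/10) ∧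
    8*c^3 + 4*c^2 - 3*c - 1 = 0 := by
  have hcont : ContinuousOn (fun c : ℝ => 8*c^3 + 4*c^2 - 3*c - 1)
      (Set.Icc (-(4:ℝ)/5) (-(7:ℝ)/10)) := by fun_prop
  have h := intermediate_value_Icc (by norm_num : (-(4:ℝ)/5) ≤ -(7:ℝ)/10) hcont
  have h0 : (0:ℝ) ∈ Set.Icc ((fun c : ℝ => 8*c^3 + 4*c^2 - 3*c - 1) (-(4:ℝ)/5))
      ((fun c : ℝ => 8*c^3 + 4*c^2 - 3*c - 1) (-(7:ℝ)/10)) := by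
    constructor <;> norm_num
  obtain ⟨c, hc, hc0⟩ := h h0
  exact ⟨c, hc, hc0⟩

def cstar : ℝ := cstar_ex.choose

lemma cstar_mem : cstar ∈ Set.Icc (-(4:ℝ)/5) (-(7:ℝ)/10) := cstar_ex.choose_spec.1
lemma cstar_root : 8*cstar^3 + 4*cstar^2 - 3*cstar - 1 = 0 := cstar_ex.choose_spec.2

lemma cstar_lo : -(4:ℝ)/5 ≤ cstar := cstar_mem.1
lemma cstar_hi : cstar ≤ -(7:ℝ)/10 := cstar_mem.2

def sstar : ℝ := Real.sqrt (1 - cstar^2)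

lemma sstar_sq : sstar ^ 2 = 1 - cstar ^ 2 := by
  unfold sstar
  rw [Real.sq_sqrt]
  nlinarith [cstar_lo, cstar_hi]

lemma sstar_pos : 0 < sstar := by
  unfold sstar
  apply Real.sqrt_pos.2
  nlinarith [cstar_lo, cstar_hi]

lemma star_id : 2*cstar^2 + 2*cstar - 2*sstar*cstar - sstar = 0 := by
  have h1 : (sstar*(2*cstar+1))^2 = (2*cstar*(cstar+1))^2 := by
    have := sstar_sq
    linear_combination (2*cstar+1)^2 * sstar_sq - (cstar+1) * cstar_root
  have h2 : sstar*(2*cstar+1) < 0 := by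
    have := sstar_pos
    nlinarith [cstar_hi]
  have h3 : 2*cstar*(cstar+1) < 0 := by nlinarith [cstar_lo, cstar_hi]
  nlinarith [h1, h2, h3]

def astar : ℝ := cstar * kk
def bstar : ℝ := (sstar - 1) * kk

def S1 : Set ℂ := {⟨kk,kk⟩, ⟨-kk,kk⟩, ⟨-kk,-kk⟩, ⟨kk,-kk⟩}
def S2 : Set ℂ :=
  {⟨astar,bstar⟩, ⟨-astar,bstar⟩, ⟨-astar,bstar-2*astar⟩, ⟨astar,bstar-2*astar⟩}



lemma circumcenter (a b w1 w2 x y : ℝ) (hw : ¬(w1 = 0 ∧ w2 = 0))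
    (h12 : (a-x)^2 + (b-y)^2 = (a+w1-x)^2 + (b+w2-y)^2)
    (h13 : (a-x)^2 + (b-y)^2 = (a+w1-w2-x)^2 + (b+w1+w2-y)^2) :
    x = a + (w1-w2)/2 ∧ y = b + (w1+w2)/2 := by
  have hd : 0 < w1^2 + w2^2 := by
    rcases not_and_or.1 hw with h | h
    · have : 0 < w1^2 := by positivity
      nlinarith [sq_nonneg w2]
    · have : 0 < w2^2 := by positivity
      nlinarith [sq_nonneg w1]
  constructor
  · have key : (x - (a + (w1-w2)/2)) * (2*(w1^2+w2^2)) = 0 := by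
      linear_combination (w1+w2) * h12 - w2 * h13
    rcases mul_eq_zero.1 key with h | h
    · linarith
    · linarith
  · have key : (y - (b + (w1+w2)/2)) * (2*(w1^2+w2^2)) = 0 := by
      linear_combination -(w1-w2) * h12 + w1 * h13
    rcases mul_eq_zero.1 key with h | h
    · linarith
    · linarith

lemma perm_insert (z1 z2 z3 z4 : ℂ) :
    ({z1, z2, z3, z4} : Set ℂ) = {z2, z3, z4, z1} := by
  ext x; simp only [Set.mem_insert_iff, Set.mem_singleton_iff]; tauto

lemma threeCircle_core (a b w1 w2 : ℝ) (hw : ¬(w1=0 ∧ w2=0))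
    (e1 : a^2+b^2 = 1) (e2 : (a+w1)^2+(b+w2)^2 = 1)
    (e3 : (a+w1-w2)^2+(b+w1+w2)^2 = 1)
    (him1 : -kk ≤ b) (him2 : -kk ≤ b + w2) (him3 : -kk ≤ b + w1 + w2)
    (him4 : -kk ≤ b + w1) :
    ((a = kk ∨ a = -kk) ∧ (b = kk ∨ b = -kk)) ∧ w1 = -(a+b) ∧ w2 = a - b := by
  have hcc := circumcenter a b w1 w2 0 0 hw (by nlinarith) (by nlinarith)
  have hx : w1 = -(a+b) := by
    have h1 := hcc.1; have h2 := hcc.2; linarith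
  have hy : w2 = a - b := by
    have h1 := hcc.1; have h2 := hcc.2; linarith
  have hA2 : -kk ≤ a := by linarith [him2, hy]
  have hA4 : a ≤ kk := by linarith [him4, hx]
  have hB3 : b ≤ kk := by linarith [him3, hx, hy]
  have ha2 : a^2 = 1/2 := by nlinarith [kk_sq]
  have hb2 : b^2 = 1/2 := by nlinarith [kk_sq]
  refine ⟨⟨?_, ?_⟩, hx, hy⟩
  · have : (a - kk) * (a + kk) = 0 := by linear_combination ha2 - kk_sq
    rcases mul_eq_zero.1 this with h | h
    · left; linarith
    · right; linarith
  · have : (b - kk) * (b + kk) = 0 := by linear_combination hb2 - kk_sq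
    rcases mul_eq_zero.1 this with h | h
    · left; linarith
    · right; linarith

/-- Three vertices on the unit circle force the standard square. -/
lemma threeCircle (p w : ℂ) (hw : w ≠ 0)
    (h1 : normSq p = 1) (h2 : normSq (p+w) = 1) (h3 : normSq (p+w+I*w) = 1)
    (him1 : -kk ≤ p.im) (him2 : -kk ≤ (p+w).im)
    (him3 : -kk ≤ (p+w+I*w).im) (him4 : -kk ≤ (p+I*w).im) :
    ({p, p+w, p+w+I*w, p+I*w} : Set ℂ) = S1 := by
  have hwc : ¬(w.re = 0 ∧ w.im = 0) := by
    rintro ⟨hu1, hu2⟩; exact hw (Complex.ext hu1 hu2)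
  rw [Complex.normSq_apply] at h1 h2 h3
  simp only [Complex.add_re, Complex.add_im, Complex.mul_re, Complex.mul_im,
    Complex.I_re, Complex.I_im] at h2 h3 him2 him3 him4
  have core := threeCircle_core p.re p.im w.re w.im hwc
    (by nlinarith) (by nlinarith) (by nlinarith)
    him1 (by linarith) (by linarith) (by linarith)
  obtain ⟨⟨ha, hb⟩, hx, hy⟩ := core
  have hv2 : p + w = (⟨-p.im, p.re⟩ : ℂ) := by
    apply Complex.ext
    · show p.re + w.re = -p.im
      rw [hx]; ring
    · show p.im + w.im = p.re
      rw [hy]; ring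
  have hv3 : p + w + I*w = (⟨-p.re, -p.im⟩ : ℂ) := by
    apply Complex.ext
    · show p.re + w.re + (I.re * w.re - I.im * w.im) = -p.re
      simp [Complex.I_re, Complex.I_im]
      rw [hx, hy]; ring
    · show p.im + w.im + (I.re * w.im + I.im * w.re) = -p.im
      simp [Complex.I_re, Complex.I_im]
      rw [hx, hy]; ring
  have hv4 : p + I*w = (⟨p.im, -p.re⟩ : ℂ) := by
    apply Complex.ext
    · show p.re + (I.re * w.re - I.im * w.im) = p.im
      simp [Complex.I_re, Complex.I_im]
      rw [hy]; ring
    · show p.im + (I.re * w.im + I.im * w.re) = -p.re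
      simp [Complex.I_re, Complex.I_im]
      rw [hx]; ring
  have hv1 : p = (⟨p.re, p.im⟩ : ℂ) := Complex.ext rfl rfl
  rcases ha with ha | ha <;> rcases hb with hb | hb <;>
    rw [ha, hb] at hv1 hv2 hv3 hv4 <;> rw [hv3, hv4, hv2, hv1] <;> unfold S1
  · rfl
  · -- a = kk, b = -kk
    simp only [neg_neg]
    exact perm_insert _ _ _ _
  · -- a = -kk, b = kk
    simp only [neg_neg]
    exact (perm_insert _ _ _ _).trans ((perm_insert _ _ _ _).trans
      (perm_insert _ _ _ _))
  · -- a = -kk, b = -kk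
    simp only [neg_neg]
    exact (perm_insert _ _ _ _).trans (perm_insert _ _ _ _)

/-- Three vertices on the small circle is impossible. -/
lemma threeK (p w : ℂ) (hw : w ≠ 0)
    (h1 : normSq (p + kk*I) = 1/2) (h2 : normSq (p+w+kk*I) = 1/2)
    (h3 : normSq (p+w+I*w+kk*I) = 1/2)
    (him1 : -kk ≤ p.im) (him2 : -kk ≤ (p+w).im)
    (him3 : -kk ≤ (p+w+I*w).im) (him4 : -kk ≤ (p+I*w).im) : False := by
  have hwc : ¬(w.re = 0 ∧ w.im = 0) := by
    rintro ⟨hu1, hu2⟩; exact hw (Complex.ext hu1 hu2)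
  rw [Complex.normSq_apply] at h1 h2 h3
  simp only [Complex.add_re, Complex.add_im, Complex.mul_re, Complex.mul_im,
    Complex.I_re, Complex.I_im, Complex.ofReal_re, Complex.ofReal_im]
    at h1 h2 h3 him2 him3 him4
  have hcc := circumcenter p.re p.im w.re w.im 0 (-kk) hwc
    (by nlinarith) (by nlinarith)
  have h1' := hcc.1
  have h2' := hcc.2
  have hb : p.im = -kk := by linarith [him3]
  have hu12 : w.re + w.im = 0 := by linarith
  have hu1 : w.re = 0 := by linarith [him4]
  have hu2 : w.im = 0 := by linarith [him2]
  nlinarith [kk_pos, h1, hu1, hu2, hb]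


lemma cubic_unique (c s : ℝ) (hcs : c^2+s^2 = 1)
    (hstar : 2*c^2+2*c-2*s*c-s = 0) (hs : 0 < s) (h2c : 2*c ≤ s) :
    c = cstar ∧ s = sstar := by
  have hc1 : -1 < c := by nlinarith
  have hchalf : c < -1/2 := by
    by_contra hcon
    push_neg at hcon
    rcases eq_or_lt_of_le hcon with h | h
    · subst h
      linarith [hstar]
    · rcases le_or_gt c 0 with h0 | h0
      · nlinarith [mul_pos hs (by linarith : (0:ℝ) < 2*c+1)]
      · nlinarith [mul_pos h0 (by linarith : (0:ℝ) < 2*c+1)]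
  have hg0 : 8*c^3+4*c^2-3*c-1 = 0 := by
    have hg : (c+1)*(8*c^3+4*c^2-3*c-1) = 0 := by
      linear_combination (2*c+1)^2*hcs + (s*(2*c+1)+2*c*(c+1))*hstar
    rcases mul_eq_zero.1 hg with h | h
    · nlinarith
    · exact h
  have hlo : -4/5 ≤ c := by
    by_contra hcon
    push_neg at hcon
    have h1 : 0 < -c - 4/5 := by linarith
    have h2 : 0 < 8*c^2 - 12/5*c - 27/25 := by nlinarith
    nlinarith [hg0, mul_pos h1 h2]
  have hhi : c ≤ -7/10 := by
    by_contra hcon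
    push_neg at hcon
    have hx : 0 < -c - 1/2 := by linarith
    have hx5 : -c - 1/2 < 1/5 := by linarith
    rcases le_or_gt (8*c^2 - 3) 0 with hy | hy
    · nlinarith [mul_nonneg hx.le (neg_nonneg.2 hy)]
    · have hyb : 8*c^2 - 3 < 23/25 := by nlinarith
      nlinarith [mul_pos hx hy, mul_lt_mul_of_pos_left hyb hx,
        mul_lt_mul_of_pos_right hx5 hy]
  have hceq : c = cstar := by
    have hfac : (c - cstar)*(8*(c^2+c*cstar+cstar^2)+4*(c+cstar)-3) = 0 := by
      linear_combination hg0 - cstar_root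
    have hpos : 0 < 8*(c^2+c*cstar+cstar^2)+4*(c+cstar)-3 := by
      nlinarith [cstar_lo, cstar_hi, hlo, hhi,
        mul_nonneg (by linarith : (0:ℝ) ≤ -c - 7/10) (by linarith [cstar_hi] : (0:ℝ) ≤ -cstar - 7/10)]
    rcases mul_eq_zero.1 hfac with h | h
    · linarith [sub_eq_zero.1 h]
    · linarith
  have hseq : s = sstar := by
    have h1 : s^2 = sstar^2 := by
      rw [sstar_sq, ← hceq]; linarith [hcs]
    nlinarith [sstar_pos, hs, h1]
  exact ⟨hceq, hseq⟩

lemma adjCore (a b w1 w2 : ℝ) (hw : ¬(w1=0 ∧ w2=0))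
    (h1 : a^2 + (b+kk)^2 = 1/2) (h1' : -kk < b)
    (h2 : (a+w1)^2 + (b+w2+kk)^2 = 1/2)
    (h3 : (a+w1-w2)^2 + (b+w1+w2)^2 = 1)
    (h4 : (a-w2)^2 + (b+w1)^2 = 1) (h4' : -kk ≤ b + w1) :
    a = astar ∧ b = bstar ∧ w1 = -(2*astar) ∧ w2 = 0 := by
  have hkk := kk_pos
  have hk2 := kk_sq
  have hw2 : w2 = 0 := by
    have key : w2 * (2*kk) = 0 := by linear_combination h2 - h1 - h3 + h4
    rcases mul_eq_zero.1 key with h | h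
    · exact h
    · linarith
  subst hw2
  have hw1 : w1 ≠ 0 := fun h => hw ⟨h, rfl⟩
  have hw1v : w1 = -(2*a) := by
    have key : w1 * (w1 + 2*a) = 0 := by linear_combination h2 - h1
    rcases mul_eq_zero.1 key with h | h
    · exact absurd h hw1
    · linarith
  subst hw1v
  -- change of variables
  have hcs : (2*kk*a)^2 + (2*kk*(b+kk))^2 = 1 := by
    linear_combination 4*kk^2*h1 + 2*hk2
  have hstar : 2*(2*kk*a)^2 + 2*(2*kk*a) - 2*(2*kk*(b+kk))*(2*kk*a) - (2*kk*(b+kk)) = 0 := by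
    linear_combination 2*kk^2*h4 - 2*kk^2*h1 - 2*(4*kk*a - 2*kk*b - kk^2)*hk2
  have hs : 0 < 2*kk*(b+kk) := by
    have : 0 < b + kk := by linarith
    positivity
  have h2c : 2*(2*kk*a) ≤ 2*kk*(b+kk) := by
    have h5 : 0 ≤ b + -(2*a) + kk := by linarith
    nlinarith [mul_nonneg (le_of_lt hkk) h5]
  obtain ⟨hc, hsv⟩ := cubic_unique (2*kk*a) (2*kk*(b+kk)) hcs hstar hs h2c
  have ha : a = astar := by
    have h6 : (a - astar) * (2*kk) = 0 := by
      unfold astar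
      linear_combination hc - 2*cstar*hk2
    rcases mul_eq_zero.1 h6 with h | h
    · linarith [sub_eq_zero.1 h]
    · linarith
  have hb : b = bstar := by
    have h6 : (b - bstar) * (2*kk) = 0 := by
      unfold bstar
      linear_combination hsv - 2*sstar*hk2
    rcases mul_eq_zero.1 h6 with h | h
    · linarith [sub_eq_zero.1 h]
    · linarith
  exact ⟨ha, hb, by rw [ha], rfl⟩

/-- Adjacent case: v1 v2 on the small circle (strictly), v3 v4 on the unit circle. -/
lemma adjacent (p w : ℂ) (hw : w ≠ 0)
    (h1 : normSq (p + kk*I) = 1/2) (h1' : -kk < p.im)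
    (h2 : normSq (p + w + kk*I) = 1/2)
    (h3 : normSq (p+w+I*w) = 1) (h4 : normSq (p+I*w) = 1)
    (h4' : -kk ≤ (p+I*w).im) :
    ({p, p+w, p+w+I*w, p+I*w} : Set ℂ) = S2 := by
  have hwc : ¬(w.re = 0 ∧ w.im = 0) := by
    rintro ⟨hu1, hu2⟩; exact hw (Complex.ext hu1 hu2)
  rw [Complex.normSq_apply] at h1 h2 h3 h4
  simp only [Complex.add_re, Complex.add_im, Complex.mul_re, Complex.mul_im,
    Complex.I_re, Complex.I_im, Complex.ofReal_re, Complex.ofReal_im]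
    at h1 h2 h3 h4 h4'
  obtain ⟨ha, hb, hw1, hw2⟩ := adjCore p.re p.im w.re w.im hwc
    (by nlinarith) h1' (by nlinarith) (by nlinarith) (by nlinarith) (by linarith)
  have hv2 : p + w = (⟨-astar, bstar⟩ : ℂ) := by
    apply Complex.ext
    · show p.re + w.re = -astar
      rw [ha, hw1]; ring
    · show p.im + w.im = bstar
      rw [hb, hw2]; ring
  have hv3 : p + w + I*w = (⟨-astar, bstar - 2*astar⟩ : ℂ) := by
    apply Complex.ext
    · show p.re + w.re + (I.re * w.re - I.im * w.im) = -astar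
      simp only [Complex.I_re, Complex.I_im]
      rw [ha, hw1, hw2]; ring
    · show p.im + w.im + (I.re * w.im + I.im * w.re) = bstar - 2*astar
      simp only [Complex.I_re, Complex.I_im]
      rw [hb, hw1, hw2]; ring
  have hv4 : p + I*w = (⟨astar, bstar - 2*astar⟩ : ℂ) := by
    apply Complex.ext
    · show p.re + (I.re * w.re - I.im * w.im) = astar
      simp only [Complex.I_re, Complex.I_im]
      rw [ha, hw2]; ring
    · show p.im + (I.re * w.im + I.im * w.re) = bstar - 2*astar
      simp only [Complex.I_re, Complex.I_im]
      rw [hb, hw1]; ring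
  have hv1 : p = (⟨astar, bstar⟩ : ℂ) := by
    apply Complex.ext
    · exact ha
    · exact hb
  rw [hv3, hv4, hv2, hv1]
  rfl

/-- Diagonal case: v1 v3 on small circle strictly, v2 v4 on unit circle: impossible. -/
lemma diagonal (p w : ℂ)
    (h1 : normSq (p + kk*I) = 1/2) (h1' : -kk < p.im)
    (h3 : normSq (p+w+I*w + kk*I) = 1/2) (h3' : -kk < (p+w+I*w).im)
    (h2 : normSq (p+w) = 1) (h4 : normSq (p+I*w) = 1) : False := by
  rw [Complex.normSq_apply] at h1 h2 h3 h4
  simp only [Complex.add_re, Complex.add_im, Complex.mul_re, Complex.mul_im,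
    Complex.I_re, Complex.I_im, Complex.ofReal_re, Complex.ofReal_im]
    at h1 h2 h3 h4 h3'
  have hkk := kk_pos
  have hk2 := kk_sq
  have key : 2*kk*(2*p.im + w.re + w.im) + 2 = 0 := by
    linear_combination h1 + h3 - h2 - h4 - 2*hk2
  have hSpos : 0 < 2*p.im + w.re + w.im + 2*kk := by linarith
  nlinarith [key, hk2, mul_pos hkk hSpos]


def onC (z : ℂ) : Prop :=
  (normSq z = 1 ∨ normSq (z + kk*I) = 1/2) ∧ -kk ≤ z.im

lemma strictK (z : ℂ) (hk : normSq (z + kk*I) = 1/2) (hz : -kk ≤ z.im)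
    (hne : ¬ normSq z = 1) : -kk < z.im := by
  rcases lt_or_eq_of_le hz with h | h
  · exact h
  · exfalso
    apply hne
    rw [Complex.normSq_apply] at hk ⊢
    simp only [Complex.add_re, Complex.add_im, Complex.mul_re, Complex.mul_im,
      Complex.I_re, Complex.I_im, Complex.ofReal_re, Complex.ofReal_im] at hk
    nlinarith [kk_sq, hk, h]

lemma permA (z1 z2 z3 z4 : ℂ) : ({z1,z2,z3,z4} : Set ℂ) = {z2,z3,z4,z1} :=
  perm_insert z1 z2 z3 z4
lemma permB (z1 z2 z3 z4 : ℂ) : ({z1,z2,z3,z4} : Set ℂ) = {z3,z4,z1,z2} :=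
  (perm_insert z1 z2 z3 z4).trans (perm_insert z2 z3 z4 z1)
lemma permC (z1 z2 z3 z4 : ℂ) : ({z1,z2,z3,z4} : Set ℂ) = {z4,z1,z2,z3} :=
  (permB z1 z2 z3 z4).trans (perm_insert z3 z4 z1 z2)

lemma rot_quad (v1 v2 v3 v4 : ℂ) (h21 : v2 - v1 ≠ 0)
    (h3 : v3 = v2 + I*(v2-v1)) (h4 : v4 = v1 + I*(v2-v1)) :
    (v3 - v2 ≠ 0) ∧ (v4 = v3 + I*(v3-v2)) ∧ (v1 = v2 + I*(v3-v2)) := by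
  refine ⟨?_, ?_, ?_⟩
  · intro h
    apply h21
    have hI : Complex.I * (v2 - v1) = 0 := by linear_combination h - h3
    rcases mul_eq_zero.1 hI with h' | h'
    · exact absurd h' Complex.I_ne_zero
    · exact h'
  · linear_combination h4 - h3 - I*h3 + (v1-v2)*Complex.I_sq
  · linear_combination -I*h3 + (v1-v2)*Complex.I_sq

lemma quadA (v1 v2 v3 v4 : ℂ) (h21 : v2 - v1 ≠ 0)
    (h3 : v3 = v2 + I*(v2-v1)) (h4 : v4 = v1 + I*(v2-v1))
    (n1 : normSq v1 = 1) (n2 : normSq v2 = 1) (n3 : normSq v3 = 1)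
    (i1 : -kk ≤ v1.im) (i2 : -kk ≤ v2.im) (i3 : -kk ≤ v3.im) (i4 : -kk ≤ v4.im) :
    ({v1,v2,v3,v4} : Set ℂ) = S1 := by
  have e2 : v1 + (v2 - v1) = v2 := by ring
  have e3 : v1 + (v2 - v1) + I*(v2-v1) = v3 := by rw [h3]; ring
  have e4 : v1 + I*(v2-v1) = v4 := h4.symm
  have main := threeCircle v1 (v2 - v1) h21 n1 (by rw [e2]; exact n2)
    (by rw [e3]; exact n3) i1 (by rw [e2]; exact i2) (by rw [e3]; exact i3)
    (by rw [e4]; exact i4)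
  rw [e3, e2, e4] at main
  exact main

lemma quadB (v1 v2 v3 v4 : ℂ) (h21 : v2 - v1 ≠ 0)
    (h3 : v3 = v2 + I*(v2-v1)) (h4 : v4 = v1 + I*(v2-v1))
    (k1 : normSq (v1 + kk*I) = 1/2) (k2 : normSq (v2 + kk*I) = 1/2)
    (k3 : normSq (v3 + kk*I) = 1/2)
    (i1 : -kk ≤ v1.im) (i2 : -kk ≤ v2.im) (i3 : -kk ≤ v3.im) (i4 : -kk ≤ v4.im) :
    False := by
  have e2 : v1 + (v2 - v1) = v2 := by ring
  have e3 : v1 + (v2 - v1) + I*(v2-v1) = v3 := by rw [h3]; ring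
  have e4 : v1 + I*(v2-v1) = v4 := h4.symm
  exact threeK v1 (v2 - v1) h21 k1 (by rw [e2]; exact k2) (by rw [e3]; exact k3)
    i1 (by rw [e2]; exact i2) (by rw [e3]; exact i3) (by rw [e4]; exact i4)

lemma quadAdj (v1 v2 v3 v4 : ℂ) (h21 : v2 - v1 ≠ 0)
    (h3 : v3 = v2 + I*(v2-v1)) (h4 : v4 = v1 + I*(v2-v1))
    (k1 : normSq (v1 + kk*I) = 1/2) (s1 : -kk < v1.im)
    (k2 : normSq (v2 + kk*I) = 1/2)
    (n3 : normSq v3 = 1) (n4 : normSq v4 = 1) (i4 : -kk ≤ v4.im) :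
    ({v1,v2,v3,v4} : Set ℂ) = S2 := by
  have e2 : v1 + (v2 - v1) = v2 := by ring
  have e3 : v1 + (v2 - v1) + I*(v2-v1) = v3 := by rw [h3]; ring
  have e4 : v1 + I*(v2-v1) = v4 := h4.symm
  have main := adjacent v1 (v2 - v1) h21 k1 s1 (by rw [e2]; exact k2)
    (by rw [e3]; exact n3) (by rw [e4]; exact n4) (by rw [e4]; exact i4)
  rw [e3, e2, e4] at main
  exact main

lemma quadDiag (v1 v2 v3 v4 : ℂ) (h21 : v2 - v1 ≠ 0)
    (h3 : v3 = v2 + I*(v2-v1)) (h4 : v4 = v1 + I*(v2-v1))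
    (k1 : normSq (v1 + kk*I) = 1/2) (s1 : -kk < v1.im)
    (k3 : normSq (v3 + kk*I) = 1/2) (s3 : -kk < v3.im)
    (n2 : normSq v2 = 1) (n4 : normSq v4 = 1) : False := by
  have e2 : v1 + (v2 - v1) = v2 := by ring
  have e3 : v1 + (v2 - v1) + I*(v2-v1) = v3 := by rw [h3]; ring
  have e4 : v1 + I*(v2-v1) = v4 := h4.symm
  exact diagonal v1 (v2 - v1) k1 s1 (by rw [e3]; exact k3) (by rw [e3]; exact s3)
    (by rw [e2]; exact n2) (by rw [e4]; exact n4)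


lemma driver4 (v1 v2 v3 v4 : ℂ) (h21 : v2 - v1 ≠ 0)
    (h3 : v3 = v2 + I*(v2-v1)) (h4 : v4 = v1 + I*(v2-v1))
    (m1 : onC v1) (m2 : onC v2) (m3 : onC v3) (m4 : onC v4) :
    ({v1,v2,v3,v4} : Set ℂ) = S1 ∨ ({v1,v2,v3,v4} : Set ℂ) = S2 := by
  obtain ⟨r21, r3, r4⟩ := rot_quad v1 v2 v3 v4 h21 h3 h4
  obtain ⟨t21, t3, t4⟩ := rot_quad v2 v3 v4 v1 r21 r3 r4
  obtain ⟨u21, u3, u4⟩ := rot_quad v3 v4 v1 v2 t21 t3 t4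
  by_cases c1 : normSq v1 = 1 <;> by_cases c2 : normSq v2 = 1 <;>
    by_cases c3 : normSq v3 = 1 <;> by_cases c4 : normSq v4 = 1
  -- TTTT
  · exact Or.inl (quadA v1 v2 v3 v4 h21 h3 h4 c1 c2 c3 m1.2 m2.2 m3.2 m4.2)
  -- TTTF
  · exact Or.inl (quadA v1 v2 v3 v4 h21 h3 h4 c1 c2 c3 m1.2 m2.2 m3.2 m4.2)
  -- TTFT : circle 1,2,4 : rotate 3
  · exact Or.inl ((permC v1 v2 v3 v4).trans
      (quadA v4 v1 v2 v3 u21 u3 u4 c4 c1 c2 m4.2 m1.2 m2.2 m3.2))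
  -- TTFF : K at 3,4 : rotate 2
  · exact Or.inr ((permB v1 v2 v3 v4).trans
      (quadAdj v3 v4 v1 v2 t21 t3 t4 (m3.1.resolve_left c3)
        (strictK v3 (m3.1.resolve_left c3) m3.2 c3) (m4.1.resolve_left c4)
        c1 c2 m2.2))
  -- TFTT : circle 1,3,4 : rotate 2
  · exact Or.inl ((permB v1 v2 v3 v4).trans
      (quadA v3 v4 v1 v2 t21 t3 t4 c3 c4 c1 m3.2 m4.2 m1.2 m2.2))
  -- TFTF : K at 2,4 : rotate 1, diagonal
  · exact False.elim (quadDiag v2 v3 v4 v1 r21 r3 r4 (m2.1.resolve_left c2)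
      (strictK v2 (m2.1.resolve_left c2) m2.2 c2) (m4.1.resolve_left c4)
      (strictK v4 (m4.1.resolve_left c4) m4.2 c4) c3 c1)
  -- TFFT : K at 2,3 : rotate 1
  · exact Or.inr ((permA v1 v2 v3 v4).trans
      (quadAdj v2 v3 v4 v1 r21 r3 r4 (m2.1.resolve_left c2)
        (strictK v2 (m2.1.resolve_left c2) m2.2 c2) (m3.1.resolve_left c3)
        c4 c1 m1.2))
  -- TFFF : K at 2,3,4 : rotate 1
  · exact False.elim (quadB v2 v3 v4 v1 r21 r3 r4 (m2.1.resolve_left c2)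
      (m3.1.resolve_left c3) (m4.1.resolve_left c4) m2.2 m3.2 m4.2 m1.2)
  -- FTTT : rotate 1
  · exact Or.inl ((permA v1 v2 v3 v4).trans
      (quadA v2 v3 v4 v1 r21 r3 r4 c2 c3 c4 m2.2 m3.2 m4.2 m1.2))
  -- FTTF : K at 1,4 : rotate 3
  · exact Or.inr ((permC v1 v2 v3 v4).trans
      (quadAdj v4 v1 v2 v3 u21 u3 u4 (m4.1.resolve_left c4)
        (strictK v4 (m4.1.resolve_left c4) m4.2 c4) (m1.1.resolve_left c1)
        c2 c3 m3.2))
  -- FTFT : K at 1,3 : diagonal direct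
  · exact False.elim (quadDiag v1 v2 v3 v4 h21 h3 h4 (m1.1.resolve_left c1)
      (strictK v1 (m1.1.resolve_left c1) m1.2 c1) (m3.1.resolve_left c3)
      (strictK v3 (m3.1.resolve_left c3) m3.2 c3) c2 c4)
  -- FTFF : K at 1,3,4 : rotate 2
  · exact False.elim (quadB v3 v4 v1 v2 t21 t3 t4 (m3.1.resolve_left c3)
      (m4.1.resolve_left c4) (m1.1.resolve_left c1) m3.2 m4.2 m1.2 m2.2)
  -- FFTT : K at 1,2 : adjacent direct
  · exact Or.inr (quadAdj v1 v2 v3 v4 h21 h3 h4 (m1.1.resolve_left c1)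
      (strictK v1 (m1.1.resolve_left c1) m1.2 c1) (m2.1.resolve_left c2)
      c3 c4 m4.2)
  -- FFTF : K at 1,2,4 : rotate 3
  · exact False.elim (quadB v4 v1 v2 v3 u21 u3 u4 (m4.1.resolve_left c4)
      (m1.1.resolve_left c1) (m2.1.resolve_left c2) m4.2 m1.2 m2.2 m3.2)
  -- FFFT : direct
  · exact False.elim (quadB v1 v2 v3 v4 h21 h3 h4 (m1.1.resolve_left c1)
      (m2.1.resolve_left c2) (m3.1.resolve_left c3) m1.2 m2.2 m3.2 m4.2)
  -- FFFF : direct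
  · exact False.elim (quadB v1 v2 v3 v4 h21 h3 h4 (m1.1.resolve_left c1)
      (m2.1.resolve_left c2) (m3.1.resolve_left c3) m1.2 m2.2 m3.2 m4.2)


lemma kk_eq2 : kk = Real.sqrt 2 / 2 := by
  unfold kk
  have h2 : Real.sqrt 2 * Real.sqrt 2 = 2 := Real.mul_self_sqrt (by norm_num)
  have hpos : 0 < Real.sqrt 2 := by positivity
  field_simp
  rw [Real.sq_sqrt (by norm_num : (0:ℝ) ≤ 2)]

lemma abs_one_iff (z : ℂ) : ‖z‖ = 1 ↔ normSq z = 1 := by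
  constructor
  · intro h
    rw [← Complex.sq_norm, h, one_pow]
  · intro h
    rw [Complex.norm_def, h, Real.sqrt_one]

lemma removed_iff (z : ℂ) :
    z ∈ {z : ℂ | ∃ θ : ℝ, 5 * π / 4 < θ ∧ θ < 7 * π / 4 ∧
      z = Complex.exp (θ * Complex.I)} ↔ (normSq z = 1 ∧ z.im < -kk) := by
  constructor
  · rintro ⟨θ, hθ1, hθ2, rfl⟩
    constructor
    · rw [← abs_one_iff]
      exact Complex.norm_exp_ofReal_mul_I θ
    · rw [Complex.exp_ofReal_mul_I_im]
      have c1 : Real.cos (π + π/2) = 0 := by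
        rw [Real.cos_add]; simp
      have s1 : Real.sin (π + π/2) = -1 := by
        rw [Real.sin_add]; simp
      have h32 : Real.sin θ = -Real.cos (θ - 3*π/2) := by
        have harg : θ = (θ - 3*π/2) + (π + π/2) := by ring
        rw [harg, Real.sin_add, c1, s1]; ring_nf
      have habs : |θ - 3*π/2| < π/4 := abs_lt.2 ⟨by linarith, by linarith⟩
      have hcos : Real.cos (π/4) < Real.cos |θ - 3*π/2| :=
        Real.cos_lt_cos_of_nonneg_of_le_pi (abs_nonneg _)
          (by linarith [Real.pi_pos]) habs
      rw [Real.cos_abs] at hcos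
      rw [Real.cos_pi_div_four] at hcos
      rw [h32, kk_eq2]
      linarith
  · rintro ⟨hn, him⟩
    have habs : ‖z‖ = 1 := (abs_one_iff z).2 hn
    set θ0 := Complex.arg z with hθ0
    have hz : z = Complex.exp (θ0 * I) := by
      have h := Complex.norm_mul_exp_arg_mul_I z
      rw [habs] at h
      simpa using h.symm
    have hsin : Real.sin θ0 < -kk := by
      have h := Complex.sin_arg z
      rw [habs, div_one] at h
      rw [← hθ0] at h
      rw [h]; exact him
    have hkpos := kk_pos
    have hpi := Real.pi_pos
    have hθlo : -π < θ0 := Complex.neg_pi_lt_arg z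
    have hθhi : θ0 ≤ π := Complex.arg_le_pi z
    have hθneg : θ0 < 0 := by
      by_contra hc
      push_neg at hc
      have := Real.sin_nonneg_of_nonneg_of_le_pi hc hθhi
      linarith
    have hub : θ0 < -(π/4) := by
      by_contra hc
      push_neg at hc
      have hmono := Real.strictMonoOn_sin.monotoneOn
        (Set.mem_Icc.2 ⟨by linarith, by linarith⟩)
        (Set.mem_Icc.2 ⟨by linarith, by linarith⟩) hc
      rw [Real.sin_neg, Real.sin_pi_div_four] at hmono
      rw [kk_eq2] at hsin
      linarith
    have hlb : -(3*π/4) < θ0 := by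
      by_contra hc
      push_neg at hc
      have hmono := Real.strictMonoOn_sin.monotoneOn
        (Set.mem_Icc.2 ⟨by linarith, by linarith⟩)
        (Set.mem_Icc.2 ⟨by linarith, by linarith⟩)
        (by linarith : π + θ0 ≤ π/4)
      have href := Real.sin_pi_sub (π + θ0)
      rw [show π - (π + θ0) = -θ0 by ring, Real.sin_neg] at href
      rw [Real.sin_pi_div_four] at hmono
      rw [kk_eq2] at hsin
      linarith
    refine ⟨θ0 + 2*π, by linarith, by linarith, ?_⟩
    rw [hz, Complex.ofReal_add, add_mul, Complex.exp_add]
    have h2pi : ((2*π : ℝ) : ℂ) * I = 2 * ↑π * I := by push_cast; ring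
    rw [h2pi, Complex.exp_two_pi_mul_I, mul_one]
  
lemma bparam_iff (z : ℂ) :
    z ∈ {z : ℂ | ∃ x : ℝ, -(1 / Real.sqrt 2) ≤ x ∧ x ≤ 1 / Real.sqrt 2 ∧
        z = (x : ℂ) + (Real.sqrt (1 / 2 - x ^ 2) - 1 / Real.sqrt 2 : ℝ) * Complex.I} ↔
    (normSq (z + kk*I) = 1/2 ∧ -kk ≤ z.im) := by
  have hkpos := kk_pos
  have hk2 := kk_sq
  constructor
  · rintro ⟨x, hx1, hx2, rfl⟩
    have hx1' : -kk ≤ x := hx1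
    have hx2' : x ≤ kk := hx2
    have hxs : 0 ≤ 1/2 - x^2 := by nlinarith
    have hsq : Real.sqrt (1/2 - x^2) ^ 2 = 1/2 - x^2 := Real.sq_sqrt hxs
    have hsnn : 0 ≤ Real.sqrt (1/2 - x^2) := Real.sqrt_nonneg _
    constructor
    · rw [Complex.normSq_apply]
      simp only [Complex.add_re, Complex.add_im, Complex.mul_re, Complex.mul_im,
        Complex.I_re, Complex.I_im, Complex.ofReal_re, Complex.ofReal_im]
      have : (1:ℝ)/Real.sqrt 2 = kk := rfl
      rw [this]
      nlinarith [hsq]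
    · simp only [Complex.add_im, Complex.mul_im, Complex.I_im, Complex.I_re,
        Complex.ofReal_re, Complex.ofReal_im]
      have : (1:ℝ)/Real.sqrt 2 = kk := rfl
      rw [this]
      nlinarith [hsnn]
  · rintro ⟨hn, him⟩
    rw [Complex.normSq_apply] at hn
    simp only [Complex.add_re, Complex.add_im, Complex.mul_re, Complex.mul_im,
      Complex.I_re, Complex.I_im, Complex.ofReal_re, Complex.ofReal_im] at hn
    refine ⟨z.re, ?_, ?_, ?_⟩
    · show -(1/Real.sqrt 2) ≤ z.re
      have : (1:ℝ)/Real.sqrt 2 = kk := rfl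
      rw [this]
      nlinarith [hn, sq_nonneg (z.im + kk)]
    · show z.re ≤ 1/Real.sqrt 2
      have : (1:ℝ)/Real.sqrt 2 = kk := rfl
      rw [this]
      nlinarith [hn, sq_nonneg (z.im + kk)]
    · apply Complex.ext
      · simp
      · simp only [Complex.add_im, Complex.mul_im, Complex.I_im, Complex.I_re,
          Complex.ofReal_re, Complex.ofReal_im]
        have h1 : (1:ℝ)/Real.sqrt 2 = kk := rfl
        rw [h1]
        have h2 : 1/2 - z.re^2 = (z.im + kk)^2 := by nlinarith [hn]
        rw [h2, Real.sqrt_sq (by linarith : 0 ≤ z.im + kk)]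
        ring

lemma curve_eq :
    (({z : ℂ | ‖z‖ = 1} \
        {z : ℂ | ∃ θ : ℝ, 5 * π / 4 < θ ∧ θ < 7 * π / 4 ∧
          z = Complex.exp (θ * Complex.I)}) ∪
       {z : ℂ | ∃ x : ℝ, -(1 / Real.sqrt 2) ≤ x ∧ x ≤ 1 / Real.sqrt 2 ∧
          z = (x : ℂ) +
            (Real.sqrt (1 / 2 - x ^ 2) - 1 / Real.sqrt 2 : ℝ) * Complex.I})
      = {z : ℂ | onC z} := by
  ext z
  simp only [Set.mem_union, Set.mem_diff, Set.mem_setOf_eq]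
  rw [show (∃ θ : ℝ, 5 * π / 4 < θ ∧ θ < 7 * π / 4 ∧
      z = Complex.exp (θ * Complex.I)) ↔ (normSq z = 1 ∧ z.im < -kk) from removed_iff z]
  rw [show (∃ x : ℝ, -(1 / Real.sqrt 2) ≤ x ∧ x ≤ 1 / Real.sqrt 2 ∧
      z = (x : ℂ) + (Real.sqrt (1 / 2 - x ^ 2) - 1 / Real.sqrt 2 : ℝ) * Complex.I) ↔
      (normSq (z + kk*I) = 1/2 ∧ -kk ≤ z.im) from bparam_iff z]
  rw [abs_one_iff]
  unfold onC
  constructor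
  · rintro (⟨h1, h2⟩ | ⟨h1, h2⟩)
    · refine ⟨Or.inl h1, ?_⟩
      by_contra hc
      push_neg at hc
      exact h2 ⟨h1, hc⟩
    · exact ⟨Or.inr h1, h2⟩
  · rintro ⟨h1 | h1, h2⟩
    · exact Or.inl ⟨h1, fun ⟨_, hlt⟩ => absurd h2 (not_le.2 hlt)⟩
    · exact Or.inr ⟨h1, h2⟩


lemma astar_neg : astar < 0 := by
  unfold astar
  nlinarith [cstar_hi, kk_pos]

lemma S1_square : IsSquarePts S1 := by
  refine ⟨⟨kk,kk⟩, ⟨-(2*kk),0⟩, ?_, ?_⟩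
  · intro h
    have h2 : -(2*kk) = 0 := congrArg Complex.re h
    linarith [kk_pos]
  · have e2 : (⟨kk,kk⟩:ℂ) + ⟨-(2*kk),0⟩ = ⟨-kk,kk⟩ := by
      apply Complex.ext
      · show kk + -(2*kk) = -kk; ring
      · show kk + 0 = kk; ring
    have e3 : (⟨kk,kk⟩:ℂ) + ⟨-(2*kk),0⟩ + I*⟨-(2*kk),0⟩ = ⟨-kk,-kk⟩ := by
      apply Complex.ext
      · show kk + -(2*kk) + (I.re * -(2*kk) - I.im * 0) = -kk
        simp [Complex.I_re, Complex.I_im]; ring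
      · show kk + 0 + (I.re * 0 + I.im * -(2*kk)) = -kk
        simp [Complex.I_re, Complex.I_im]; ring
    have e4 : (⟨kk,kk⟩:ℂ) + I*⟨-(2*kk),0⟩ = ⟨kk,-kk⟩ := by
      apply Complex.ext
      · show kk + (I.re * -(2*kk) - I.im * 0) = kk
        simp [Complex.I_re, Complex.I_im]
      · show kk + (I.re * 0 + I.im * -(2*kk)) = -kk
        simp [Complex.I_re, Complex.I_im]; ring
    rw [e3, e4, e2]
    rfl

lemma S2_square : IsSquarePts S2 := by
  refine ⟨⟨astar,bstar⟩, ⟨-(2*astar),0⟩, ?_, ?_⟩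
  · intro h
    have h2 : -(2*astar) = 0 := congrArg Complex.re h
    linarith [astar_neg]
  · have e2 : (⟨astar,bstar⟩:ℂ) + ⟨-(2*astar),0⟩ = ⟨-astar,bstar⟩ := by
      apply Complex.ext
      · show astar + -(2*astar) = -astar; ring
      · show bstar + 0 = bstar; ring
    have e3 : (⟨astar,bstar⟩:ℂ) + ⟨-(2*astar),0⟩ + I*⟨-(2*astar),0⟩
        = ⟨-astar,bstar-2*astar⟩ := by
      apply Complex.ext
      · show astar + -(2*astar) + (I.re * -(2*astar) - I.im * 0) = -astar
        simp [Complex.I_re, Complex.I_im]; ring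
      · show bstar + 0 + (I.re * 0 + I.im * -(2*astar)) = bstar - 2*astar
        simp [Complex.I_re, Complex.I_im]; ring
    have e4 : (⟨astar,bstar⟩:ℂ) + I*⟨-(2*astar),0⟩ = ⟨astar,bstar-2*astar⟩ := by
      apply Complex.ext
      · show astar + (I.re * -(2*astar) - I.im * 0) = astar
        simp [Complex.I_re, Complex.I_im]
      · show bstar + (I.re * 0 + I.im * -(2*astar)) = bstar - 2*astar
        simp [Complex.I_re, Complex.I_im]; ring
    rw [e3, e4, e2]
    rfl

lemma S1_sub : S1 ⊆ {z : ℂ | onC z} := by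
  intro z hz
  simp only [S1, Set.mem_insert_iff, Set.mem_singleton_iff] at hz
  have hk := kk_pos
  have hk2 := kk_sq
  rcases hz with rfl | rfl | rfl | rfl <;>
    refine Set.mem_setOf_eq ▸ ⟨Or.inl ?_, ?_⟩
  · rw [Complex.normSq_apply]; show kk*kk + kk*kk = 1; nlinarith
  · show -kk ≤ kk; linarith
  · rw [Complex.normSq_apply]; show -kk * -kk + kk*kk = 1; nlinarith
  · show -kk ≤ kk; linarith
  · rw [Complex.normSq_apply]; show -kk * -kk + -kk * -kk = 1; nlinarith
  · show -kk ≤ -kk; linarith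
  · rw [Complex.normSq_apply]; show kk*kk + -kk * -kk = 1; nlinarith
  · show -kk ≤ -kk; linarith

lemma S2_sub : S2 ⊆ {z : ℂ | onC z} := by
  intro z hz
  simp only [S2, Set.mem_insert_iff, Set.mem_singleton_iff] at hz
  have hk := kk_pos
  have hk2 := kk_sq
  have hs2 := sstar_sq
  have hsp := sstar_pos
  have hst := star_id
  have hch := cstar_hi
  have hcl := cstar_lo
  rcases hz with rfl | rfl | rfl | rfl
  · refine Set.mem_setOf_eq ▸ ⟨Or.inr ?_, ?_⟩
    · rw [Complex.normSq_apply]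
      simp only [Complex.add_re, Complex.add_im, Complex.mul_re, Complex.mul_im,
        Complex.I_re, Complex.I_im, Complex.ofReal_re, Complex.ofReal_im]
      show (astar + (kk*0 - 0*1)) * (astar + (kk*0 - 0*1))
          + (bstar + (kk*1 + 0*0)) * (bstar + (kk*1 + 0*0)) = 1/2
      unfold astar bstar
      nlinarith [hs2, hk2]
    · show -kk ≤ bstar
      unfold bstar
      nlinarith
  · refine Set.mem_setOf_eq ▸ ⟨Or.inr ?_, ?_⟩
    · rw [Complex.normSq_apply]
      show (-astar + (kk*0 - 0*1)) * (-astar + (kk*0 - 0*1))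
          + (bstar + (kk*1 + 0*0)) * (bstar + (kk*1 + 0*0)) = 1/2
      unfold astar bstar
      nlinarith [hs2, hk2]
    · show -kk ≤ bstar
      unfold bstar
      nlinarith
  · refine Set.mem_setOf_eq ▸ ⟨Or.inl ?_, ?_⟩
    · rw [Complex.normSq_apply]
      show -astar * -astar + (bstar - 2*astar) * (bstar - 2*astar) = 1
      unfold astar bstar
      nlinarith [hs2, hk2, hst]
    · show -kk ≤ bstar - 2*astar
      unfold astar bstar
      nlinarith [mul_pos hk (show (0:ℝ) < sstar - 2*cstar by nlinarith)]
  · refine Set.mem_setOf_eq ▸ ⟨Or.inl ?_, ?_⟩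
    · rw [Complex.normSq_apply]
      show astar * astar + (bstar - 2*astar) * (bstar - 2*astar) = 1
      unfold astar bstar
      nlinarith [hs2, hk2, hst]
    · show -kk ≤ bstar - 2*astar
      unfold astar bstar
      nlinarith [mul_pos hk (show (0:ℝ) < sstar - 2*cstar by nlinarith)]

lemma S1_ne_S2 : S1 ≠ S2 := by
  intro h
  have hmem : (⟨kk,kk⟩:ℂ) ∈ S2 := by
    rw [← h]
    exact Set.mem_insert _ _
  have hk := kk_pos
  have hch := cstar_hi
  have hcl := cstar_lo
  simp only [S2, Set.mem_insert_iff, Set.mem_singleton_iff] at hmem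
  rcases hmem with h' | h' | h' | h'
  · have h2 : kk = astar := congrArg Complex.re h'
    unfold astar at h2
    nlinarith
  · have h2 : kk = -astar := congrArg Complex.re h'
    unfold astar at h2
    nlinarith
  · have h2 : kk = -astar := congrArg Complex.re h'
    unfold astar at h2
    nlinarith
  · have h2 : kk = astar := congrArg Complex.re h'
    unfold astar at h2
    nlinarith

end TwoSq
end

/-- The curve obtained from the unit circle by removing the open arc between
central angles `5π/4` and `7π/4` and replacing it with the semicircle
`y = √(1/2 − x²) − 1/√2`, `−1/√2 ≤ x ≤ 1/√2`, has exactly two inscribed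
squares. -/
theorem curve_with_exactly_two_inscribed_squares :
    (InscribedSquares
      (({z : ℂ | ‖z‖ = 1} \
        {z : ℂ | ∃ θ : ℝ, 5 * π / 4 < θ ∧ θ < 7 * π / 4 ∧
          z = Complex.exp (θ * Complex.I)}) ∪
       {z : ℂ | ∃ x : ℝ, -(1 / Real.sqrt 2) ≤ x ∧ x ≤ 1 / Real.sqrt 2 ∧
          z = (x : ℂ) +
            (Real.sqrt (1 / 2 - x ^ 2) - 1 / Real.sqrt 2 : ℝ) * Complex.I})).ncard
      = 2 := by

  rw [TwoSq.curve_eq]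
  have key : InscribedSquares {z : ℂ | TwoSq.onC z} = {TwoSq.S1, TwoSq.S2} := by
    ext S
    simp only [InscribedSquares, Set.mem_setOf_eq, Set.mem_insert_iff,
      Set.mem_singleton_iff]
    constructor
    · rintro ⟨⟨p, w, hw, rfl⟩, hsub⟩
      have m1 : TwoSq.onC p := hsub (Set.mem_insert _ _)
      have m2 : TwoSq.onC (p+w) := hsub (by simp)
      have m3 : TwoSq.onC (p+w+I*w) := hsub (by simp)
      have m4 : TwoSq.onC (p+I*w) := hsub (by simp)
      have h21 : (p+w) - p ≠ 0 := by simpa using hw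
      have h3 : p+w+I*w = (p+w) + I*((p+w)-p) := by ring
      have h4 : p+I*w = p + I*((p+w)-p) := by ring
      exact TwoSq.driver4 p (p+w) (p+w+I*w) (p+I*w) h21 h3 h4 m1 m2 m3 m4
    · rintro (rfl | rfl)
      · exact ⟨TwoSq.S1_square, TwoSq.S1_sub⟩
      · exact ⟨TwoSq.S2_square, TwoSq.S2_sub⟩
  rw [key]
  exact Set.ncard_pair TwoSq.S1_ne_S2
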